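/- arXiv:2005.13274 — 2 statements merged into one kernel-verified Lean document; each statement's English description precedes it below -/
import Mathlib

section
/- Let {s_T(j) : j ∈ N_T} be random variables and weights w_{j,N} ≥ 0 with Σ_j w_{j,N} = 1 and Σ_j w²_{j,N} → 0. Suppose sup_{j} |P(s_T(j) ≤ z) − Φ(z)| → 0 and sup_{j₁≠j₂} |P(s_T(j₁) ≤ z, s_T(j₂) ≤ z) − Φ(z)²| → 0 for each fixed z. Then Σ_{j∈N} w_{j,N} 𝟙{s_T(j) ≤ z} → Φ(z) in probability for each z, and by continuity of Φ the convergence holds uniformly in z: sup_z |Σ_j w_{j,N} 𝟙{s_T(j) ≤ z} − Φ(z)| → 0 in probability. -/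
open MeasureTheory Real Filter Finset


noncomputable def stdNormalCDF (z : ℝ) : ℝ :=
  ∫ t in Set.Iic z, Real.exp (-t ^ 2 / 2) / Real.sqrt (2 * Real.pi)

lemma gauss_eq (t : ℝ) : Real.exp (-t ^ 2 / 2) / Real.sqrt (2 * Real.pi)
    = Real.exp (-(1/2) * t ^ 2) * (Real.sqrt (2 * Real.pi))⁻¹ := by
  rw [div_eq_mul_inv]; ring_nf

lemma gauss_nonneg (t : ℝ) : 0 ≤ Real.exp (-t ^ 2 / 2) / Real.sqrt (2 * Real.pi) :=
  div_nonneg (Real.exp_nonneg _) (Real.sqrt_nonneg _)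

lemma gauss_integrable : Integrable (fun t : ℝ => Real.exp (-t ^ 2 / 2) / Real.sqrt (2 * Real.pi)) := by
  simp only [gauss_eq]
  exact (integrable_exp_neg_mul_sq (by norm_num : (0:ℝ) < 1/2)).mul_const _

lemma gauss_integral : ∫ t : ℝ, Real.exp (-t ^ 2 / 2) / Real.sqrt (2 * Real.pi) = 1 := by
  simp only [gauss_eq]
  rw [integral_mul_const, integral_gaussian]
  rw [show π / (1/2) = 2 * π by ring]
  rw [mul_inv_cancel₀]
  positivity

lemma stdNormalCDF_nonneg (z : ℝ) : 0 ≤ stdNormalCDF z :=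
  setIntegral_nonneg measurableSet_Iic fun t _ => gauss_nonneg t

lemma stdNormalCDF_mono : Monotone stdNormalCDF := fun a b hab => by
  apply setIntegral_mono_set gauss_integrable.integrableOn
  · exact Filter.Eventually.of_forall fun t => gauss_nonneg t
  · exact HasSubset.Subset.eventuallyLE (Set.Iic_subset_Iic.mpr hab)

lemma stdNormalCDF_le_one (z : ℝ) : stdNormalCDF z ≤ 1 := by
  rw [← gauss_integral]
  exact setIntegral_le_integral gauss_integrable
    (Filter.Eventually.of_forall fun t => gauss_nonneg t)

lemma stdNormalCDF_continuous : Continuous stdNormalCDF := by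
  have key : ∀ z : ℝ, stdNormalCDF z = stdNormalCDF 0 + ∫ t in (0:ℝ)..z,
      Real.exp (-t ^ 2 / 2) / Real.sqrt (2 * Real.pi) := by
    intro z
    rw [← intervalIntegral.integral_Iic_sub_Iic gauss_integrable.integrableOn
      gauss_integrable.integrableOn]
    show stdNormalCDF z = stdNormalCDF 0 + (stdNormalCDF z - stdNormalCDF 0)
    ring
  have : stdNormalCDF = fun z => stdNormalCDF 0 + ∫ t in (0:ℝ)..z,
      Real.exp (-t ^ 2 / 2) / Real.sqrt (2 * Real.pi) := funext key
  rw [this]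
  exact continuous_const.add (intervalIntegral.continuous_primitive
    (fun a b => gauss_integrable.intervalIntegrable) 0)

lemma stdNormalCDF_tendsto_atTop :
    Tendsto (fun n : ℕ => stdNormalCDF n) atTop (nhds 1) := by
  have := tendsto_setIntegral_of_monotone (μ := (volume : Measure ℝ))
    (f := fun t : ℝ => Real.exp (-t ^ 2 / 2) / Real.sqrt (2 * Real.pi))
    (s := fun n : ℕ => Set.Iic (n : ℝ))
    (fun n => measurableSet_Iic)
    (fun a b hab => Set.Iic_subset_Iic.mpr (by exact_mod_cast hab))
    gauss_integrable.integrableOn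
  have hU : (⋃ n : ℕ, Set.Iic (n : ℝ)) = Set.univ := by
    ext x; simp only [Set.mem_iUnion, Set.mem_Iic, Set.mem_univ, iff_true]
    obtain ⟨n, hn⟩ := exists_nat_ge x
    exact ⟨n, hn⟩
  rw [hU, Measure.restrict_univ, gauss_integral] at this
  exact this

lemma stdNormalCDF_tendsto_atBot :
    Tendsto (fun n : ℕ => stdNormalCDF (-(n:ℝ))) atTop (nhds 0) := by
  have := Antitone.tendsto_setIntegral (μ := (volume : Measure ℝ))
    (f := fun t : ℝ => Real.exp (-t ^ 2 / 2) / Real.sqrt (2 * Real.pi))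
    (s := fun n : ℕ => Set.Iic (-(n : ℝ)))
    (fun n => measurableSet_Iic)
    (fun a b hab => Set.Iic_subset_Iic.mpr (by exact_mod_cast neg_le_neg (by exact_mod_cast hab)))
    gauss_integrable.integrableOn
  have hI : (⋂ n : ℕ, Set.Iic (-(n : ℝ))) = ∅ := by
    ext x; simp only [Set.mem_iInter, Set.mem_Iic, Set.mem_empty_iff_false, iff_false, not_forall]
    obtain ⟨n, hn⟩ := exists_nat_gt (-x)
    exact ⟨n, by push_neg; linarith⟩
  rw [hI] at this
  simp only [Measure.restrict_empty, integral_zero_measure] at this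
  exact this

lemma integral_ind {Ω : Type*} [MeasurableSpace Ω] (P : Measure Ω)
    (A : Set Ω) (hA : MeasurableSet A) (g : Ω → ℝ)
    (hg : g = A.indicator (fun _ => (1:ℝ))) :
    ∫ ω, g ω ∂P = (P A).toReal := by
  rw [hg, integral_indicator hA, setIntegral_const, smul_eq_mul, mul_one]; rfl

lemma pointwise_conv {Ω ι : Type*} [MeasurableSpace Ω]
    (P : Measure Ω) [IsProbabilityMeasure P]
    (N : ℕ → Finset ι) (s : ℕ → ι → Ω → ℝ) (w : ℕ → ι → ℝ)
    (hmeas : ∀ n j, Measurable (s n j))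
    (hw0 : ∀ n j, 0 ≤ w n j)
    (hw1 : ∀ n, ∑ j ∈ N n, w n j = 1)
    (hw2 : Tendsto (fun n => ∑ j ∈ N n, (w n j) ^ 2) atTop (nhds 0))
    (h1 : ∀ z : ℝ, ∀ ε > (0 : ℝ), ∃ M : ℕ, ∀ n ≥ M, ∀ j ∈ N n,
      |(P {ω | s n j ω ≤ z}).toReal - stdNormalCDF z| ≤ ε)
    (h2 : ∀ z : ℝ, ∀ ε > (0 : ℝ), ∃ M : ℕ, ∀ n ≥ M, ∀ j₁ ∈ N n, ∀ j₂ ∈ N n, j₁ ≠ j₂ →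
      |(P {ω | s n j₁ ω ≤ z ∧ s n j₂ ω ≤ z}).toReal - (stdNormalCDF z) ^ 2| ≤ ε)
    (z : ℝ) (ε : ℝ) (hε : 0 < ε) :
    Tendsto (fun n =>
        P {ω | ε ≤ |(∑ j ∈ N n, w n j * (if s n j ω ≤ z then 1 else 0)) -
          stdNormalCDF z|}) atTop (nhds 0) := by
  classical
  set Φ := stdNormalCDF z with hΦdef
  have hΦ0 : 0 ≤ Φ := stdNormalCDF_nonneg z
  set A : ℕ → ι → Set Ω := fun n j => {ω | s n j ω ≤ z} with hAdef
  set B : ℕ → ι → ι → Set Ω := fun n j₁ j₂ => {ω | s n j₁ ω ≤ z ∧ s n j₂ ω ≤ z} with hBdef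
  have hA : ∀ n j, MeasurableSet (A n j) := fun n j =>
    measurableSet_le (hmeas n j) measurable_const
  have hB : ∀ n j₁ j₂, MeasurableSet (B n j₁ j₂) := by
    intro n j₁ j₂
    have : B n j₁ j₂ = A n j₁ ∩ A n j₂ := by ext ω; simp [hAdef, hBdef, Set.mem_setOf_eq]
    rw [this]; exact (hA n j₁).inter (hA n j₂)
  set p : ℕ → ι → ℝ := fun n j => (P (A n j)).toReal with hpdef
  set Q : ℕ → ι → ι → ℝ := fun n j₁ j₂ => (P (B n j₁ j₂)).toReal with hQdef
  have hp0 : ∀ n j, 0 ≤ p n j := fun n j => ENNReal.toReal_nonneg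
  have hp1 : ∀ n j, p n j ≤ 1 := by
    intro n j
    have := ENNReal.toReal_mono (ENNReal.one_ne_top) (prob_le_one (μ := P) (s := A n j))
    simpa using this
  have hQdiag : ∀ n j, Q n j j = p n j := by
    intro n j
    have : B n j j = A n j := by ext ω; simp [hAdef, hBdef, Set.mem_setOf_eq]
    simp [hQdef, hpdef, this]
  set I : ℕ → ι → Ω → ℝ := fun n j ω => if s n j ω ≤ z then 1 else 0 with hIdef
  have hIeq : ∀ n j, I n j = (A n j).indicator (fun _ => (1:ℝ)) := by
    intro n j; funext ω
    by_cases h : s n j ω ≤ z <;>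
      simp [hIdef, hAdef, h, Set.indicator_apply, Set.mem_setOf_eq]
  have hImul : ∀ n j₁ j₂, (fun ω => I n j₁ ω * I n j₂ ω)
      = (B n j₁ j₂).indicator (fun _ => (1:ℝ)) := by
    intro n j₁ j₂; funext ω
    by_cases h₁ : s n j₁ ω ≤ z <;> by_cases h₂ : s n j₂ ω ≤ z <;>
      simp [hIdef, hBdef, h₁, h₂, Set.indicator_apply, Set.mem_setOf_eq]
  have hIint : ∀ n j, Integrable (I n j) P := by
    intro n j; rw [hIeq]; exact (integrable_const (1:ℝ)).indicator (hA n j)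
  have hI2int : ∀ n j₁ j₂, Integrable (fun ω => I n j₁ ω * I n j₂ ω) P := by
    intro n j₁ j₂; rw [hImul]; exact (integrable_const (1:ℝ)).indicator (hB n j₁ j₂)
  set X : ℕ → Ω → ℝ := fun n ω => ∑ j ∈ N n, w n j * I n j ω with hXdef
  have hXint : ∀ n, Integrable (X n) P := by
    intro n
    exact integrable_finset_sum _ (fun j _ => (hIint n j).const_mul _)
  have hEI : ∀ n j, ∫ ω, I n j ω ∂P = p n j := fun n j =>
    integral_ind P (A n j) (hA n j) _ (hIeq n j)
  have hEI2 : ∀ n j₁ j₂, ∫ ω, I n j₁ ω * I n j₂ ω ∂P = Q n j₁ j₂ := fun n j₁ j₂ =>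
    integral_ind P (B n j₁ j₂) (hB n j₁ j₂) _ (hImul n j₁ j₂)
  have hEX : ∀ n, ∫ ω, X n ω ∂P = ∑ j ∈ N n, w n j * p n j := by
    intro n
    rw [hXdef]
    rw [integral_finset_sum _ (fun j _ => (hIint n j).const_mul _)]
    exact Finset.sum_congr rfl fun j _ => by rw [integral_const_mul, hEI]
  -- expansion of the square
  have hsq : ∀ n ω, (X n ω - Φ)^2
      = (∑ j₁ ∈ N n, ∑ j₂ ∈ N n, (w n j₁ * w n j₂) * (I n j₁ ω * I n j₂ ω))
        - 2*Φ*(X n ω) + Φ^2 := by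
    intro n ω
    have hx2 : (X n ω)^2 = ∑ j₁ ∈ N n, ∑ j₂ ∈ N n,
        (w n j₁ * w n j₂) * (I n j₁ ω * I n j₂ ω) := by
      rw [sq, hXdef, Finset.sum_mul_sum]
      exact Finset.sum_congr rfl fun j₁ _ => Finset.sum_congr rfl fun j₂ _ => by ring
    rw [sub_sq, hx2]; ring
  have hbigint : ∀ n, Integrable (fun ω => ∑ j₁ ∈ N n, ∑ j₂ ∈ N n,
      (w n j₁ * w n j₂) * (I n j₁ ω * I n j₂ ω)) P := by
    intro n
    exact integrable_finset_sum _ (fun j₁ _ =>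
      integrable_finset_sum _ (fun j₂ _ => (hI2int n j₁ j₂).const_mul _))
  have hXΦint : ∀ n, Integrable (fun ω => (X n ω - Φ)^2) P := by
    intro n
    have : (fun ω => (X n ω - Φ)^2) = fun ω =>
        (∑ j₁ ∈ N n, ∑ j₂ ∈ N n, (w n j₁ * w n j₂) * (I n j₁ ω * I n j₂ ω))
        - 2*Φ*(X n ω) + Φ^2 := funext (hsq n)
    rw [this]
    exact (((hbigint n).sub ((hXint n).const_mul (2*Φ))).add (integrable_const _))
  set q : ℕ → ℝ := fun n => ∫ ω, (X n ω - Φ)^2 ∂P with hqdef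
  have hq0 : ∀ n, 0 ≤ q n := fun n => integral_nonneg fun ω => sq_nonneg _
  have hE2 : ∀ n, q n = (∑ j₁ ∈ N n, ∑ j₂ ∈ N n, (w n j₁ * w n j₂) * Q n j₁ j₂)
      - 2*Φ*(∑ j ∈ N n, w n j * p n j) + Φ^2 := by
    intro n
    have hfun : (fun ω => (X n ω - Φ)^2) = fun ω =>
        ((∑ j₁ ∈ N n, ∑ j₂ ∈ N n, (w n j₁ * w n j₂) * (I n j₁ ω * I n j₂ ω))
        - 2*Φ*(X n ω)) + Φ^2 := by
      funext ω; rw [hsq n ω]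
    show (∫ ω, (X n ω - Φ)^2 ∂P) = _
    rw [hfun]
    have hcm : Integrable (fun ω => 2*Φ*(X n ω)) P := by
      exact (hXint n).const_mul _
    have hsubint : Integrable (fun ω => (∑ j₁ ∈ N n, ∑ j₂ ∈ N n,
        (w n j₁ * w n j₂) * (I n j₁ ω * I n j₂ ω)) - 2*Φ*(X n ω)) P := by
      exact (hbigint n).sub hcm
    rw [integral_add hsubint (integrable_const _)]
    rw [integral_sub (hbigint n) hcm]
    rw [integral_finset_sum _ (fun j₁ _ =>
      integrable_finset_sum _ (fun j₂ _ => (hI2int n j₁ j₂).const_mul _))]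
    rw [integral_const_mul, hEX, integral_const, probReal_univ, one_smul]
    congr 1
    congr 1
    refine Finset.sum_congr rfl fun j₁ _ => ?_
    rw [integral_finset_sum _ (fun j₂ _ => (hI2int n j₁ j₂).const_mul _)]
    exact Finset.sum_congr rfl fun j₂ _ => by rw [integral_const_mul, hEI2]
  -- the quantitative bound
  have hbound : ∀ δ > (0:ℝ), ∀ n, (∀ j ∈ N n, |p n j - Φ| ≤ δ) →
      (∀ j₁ ∈ N n, ∀ j₂ ∈ N n, j₁ ≠ j₂ → |Q n j₁ j₂ - Φ^2| ≤ δ) →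
      q n ≤ δ*(1+2*Φ) + ∑ j ∈ N n, (w n j)^2 := by
    intro δ hδ n hd1 hd2
    rw [hE2 n]
    set S := ∑ j ∈ N n, (w n j)^2 with hSdef
    have hT1 : (∑ j₁ ∈ N n, ∑ j₂ ∈ N n, (w n j₁ * w n j₂) * Q n j₁ j₂)
        ≤ (Φ^2 + δ) + S := by
      have step1 : ∀ j₁ ∈ N n, (∑ j₂ ∈ N n, (w n j₁ * w n j₂) * Q n j₁ j₂)
          ≤ (Φ^2 + δ) * (∑ j₂ ∈ N n \ {j₁}, w n j₁ * w n j₂) + (w n j₁)^2 := by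
        intro j₁ hj₁
        rw [Finset.sum_eq_sum_sdiff_singleton_add hj₁
          (fun j₂ => (w n j₁ * w n j₂) * Q n j₁ j₂)]
        have hoff : (∑ j₂ ∈ N n \ {j₁}, (w n j₁ * w n j₂) * Q n j₁ j₂)
            ≤ (Φ^2 + δ) * (∑ j₂ ∈ N n \ {j₁}, w n j₁ * w n j₂) := by
          rw [Finset.mul_sum]
          refine Finset.sum_le_sum fun j₂ hj₂ => ?_
          obtain ⟨hj₂N, hne⟩ := Finset.mem_sdiff.mp hj₂
          have hne' : j₁ ≠ j₂ := fun h => hne (Finset.mem_singleton.mpr h.symm)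
          have hQle : Q n j₁ j₂ ≤ Φ^2 + δ := by
            have := (abs_le.mp (hd2 j₁ hj₁ j₂ hj₂N hne')).2
            linarith
          rw [mul_comm (Φ^2+δ)]
          exact mul_le_mul_of_nonneg_left hQle (mul_nonneg (hw0 n j₁) (hw0 n j₂))
        have hdiag : (w n j₁ * w n j₁) * Q n j₁ j₁ ≤ (w n j₁)^2 := by
          rw [hQdiag]
          calc w n j₁ * w n j₁ * p n j₁ ≤ w n j₁ * w n j₁ * 1 :=
                mul_le_mul_of_nonneg_left (hp1 n j₁) (mul_nonneg (hw0 n j₁) (hw0 n j₁))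
            _ = (w n j₁)^2 := by ring
        linarith
      calc (∑ j₁ ∈ N n, ∑ j₂ ∈ N n, (w n j₁ * w n j₂) * Q n j₁ j₂)
          ≤ ∑ j₁ ∈ N n, ((Φ^2 + δ) * (∑ j₂ ∈ N n \ {j₁}, w n j₁ * w n j₂) + (w n j₁)^2) :=
            Finset.sum_le_sum step1
        _ = (Φ^2 + δ) * (∑ j₁ ∈ N n, ∑ j₂ ∈ N n \ {j₁}, w n j₁ * w n j₂) + S := by
            rw [Finset.sum_add_distrib, ← Finset.mul_sum]
        _ ≤ (Φ^2 + δ) * 1 + S := by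
            have hΦδ0 : 0 ≤ Φ^2 + δ := by positivity
            have hsum1 : (∑ j₁ ∈ N n, ∑ j₂ ∈ N n \ {j₁}, w n j₁ * w n j₂) ≤ 1 := by
              calc (∑ j₁ ∈ N n, ∑ j₂ ∈ N n \ {j₁}, w n j₁ * w n j₂)
                  ≤ ∑ j₁ ∈ N n, w n j₁ := by
                    refine Finset.sum_le_sum fun j₁ hj₁ => ?_
                    rw [← Finset.mul_sum]
                    calc w n j₁ * (∑ j₂ ∈ N n \ {j₁}, w n j₂)
                        ≤ w n j₁ * 1 := by
                          refine mul_le_mul_of_nonneg_left ?_ (hw0 n j₁)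
                          rw [← hw1 n]
                          exact Finset.sum_le_sum_of_subset_of_nonneg
                            (Finset.sdiff_subset) (fun j _ _ => hw0 n j)
                      _ = w n j₁ := mul_one _
                _ = 1 := hw1 n
            exact add_le_add_left (mul_le_mul_of_nonneg_left hsum1 hΦδ0) S
        _ = (Φ^2 + δ) + S := by ring
    have hT2 : Φ - δ ≤ ∑ j ∈ N n, w n j * p n j := by
      have habs : |(∑ j ∈ N n, w n j * p n j) - Φ| ≤ δ := by
        have heq : (∑ j ∈ N n, w n j * p n j) - Φ = ∑ j ∈ N n, w n j * (p n j - Φ) := by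
          rw [Finset.sum_congr rfl (fun j _ => mul_sub (w n j) (p n j) Φ),
            Finset.sum_sub_distrib, ← Finset.sum_mul, hw1 n, one_mul]
        rw [heq]
        calc |∑ j ∈ N n, w n j * (p n j - Φ)| ≤ ∑ j ∈ N n, |w n j * (p n j - Φ)| :=
              Finset.abs_sum_le_sum_abs _ _
          _ ≤ ∑ j ∈ N n, w n j * δ := by
              refine Finset.sum_le_sum fun j hj => ?_
              rw [abs_mul, abs_of_nonneg (hw0 n j)]
              exact mul_le_mul_of_nonneg_left (hd1 j hj) (hw0 n j)
          _ = δ := by rw [← Finset.sum_mul, hw1 n, one_mul]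
      linarith [(abs_le.mp habs).1]
    nlinarith [mul_le_mul_of_nonneg_left hT2 (by linarith : (0:ℝ) ≤ 2*Φ)]
  -- q tends to 0
  have hq_tendsto : Tendsto q atTop (nhds 0) := by
    rw [Metric.tendsto_atTop]
    intro η hη
    have h2Φ : (0:ℝ) < 1 + 2*Φ := by linarith
    set δ := η / (2*(1+2*Φ)) with hδdef
    have hδpos : 0 < δ := by positivity
    obtain ⟨M₁, hM₁⟩ := h1 z δ hδpos
    obtain ⟨M₂, hM₂⟩ := h2 z δ hδpos
    obtain ⟨M₃, hM₃⟩ := (Metric.tendsto_atTop.mp hw2) (η/2) (by positivity)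
    refine ⟨max M₁ (max M₂ M₃), fun n hn => ?_⟩
    have hn₁ : n ≥ M₁ := le_trans (le_max_left _ _) hn
    have hn₂ : n ≥ M₂ := le_trans (le_trans (le_max_left _ _) (le_max_right _ _)) hn
    have hn₃ : n ≥ M₃ := le_trans (le_trans (le_max_right _ _) (le_max_right _ _)) hn
    have hS : (∑ j ∈ N n, (w n j)^2) < η/2 := by
      have := hM₃ n hn₃
      rw [Real.dist_eq, sub_zero] at this
      calc (∑ j ∈ N n, (w n j)^2) ≤ |∑ j ∈ N n, (w n j)^2| := le_abs_self _
        _ < η/2 := this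
    have hqn := hbound δ hδpos n (hM₁ n hn₁) (hM₂ n hn₂)
    rw [Real.dist_eq, sub_zero, abs_of_nonneg (hq0 n)]
    have hδval : δ * (1+2*Φ) = η/2 := by
      rw [hδdef]; field_simp
    linarith
  -- Chebyshev
  have key : ∀ n, P {ω | ε ≤ |X n ω - Φ|}
      ≤ ENNReal.ofReal (q n) / ENNReal.ofReal (ε^2) := by
    intro n
    have hsub : {ω | ε ≤ |X n ω - Φ|}
        ⊆ {ω | ENNReal.ofReal (ε^2) ≤ ENNReal.ofReal ((X n ω - Φ)^2)} := by
      intro ω hω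
      refine ENNReal.ofReal_le_ofReal ?_
      calc ε^2 ≤ |X n ω - Φ|^2 := pow_le_pow_left₀ hε.le hω 2
        _ = (X n ω - Φ)^2 := sq_abs _
    refine (measure_mono hsub).trans ?_
    have hmble : AEMeasurable (fun ω => ENNReal.ofReal ((X n ω - Φ)^2)) P :=
      ENNReal.measurable_ofReal.comp_aemeasurable (hXΦint n).aemeasurable
    have hcheb := meas_ge_le_lintegral_div (ε := ENNReal.ofReal (ε^2)) hmble
      (ne_of_gt (ENNReal.ofReal_pos.mpr (by positivity)))
      ENNReal.ofReal_ne_top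
    refine hcheb.trans ?_
    rw [← ofReal_integral_eq_lintegral_ofReal (hXΦint n)
      (Filter.Eventually.of_forall fun ω => sq_nonneg _)]
  -- conclude
  have hupper : Tendsto (fun n => ENNReal.ofReal (q n) / ENNReal.ofReal (ε^2))
      atTop (nhds 0) := by
    have h1' : Tendsto (fun n => q n / ε^2) atTop (nhds 0) := by
      have := hq_tendsto.div_const (ε^2)
      simpa using this
    have h2' : Tendsto (fun n => ENNReal.ofReal (q n / ε^2)) atTop (nhds 0) := by
      have := ENNReal.tendsto_ofReal h1'
      simpa using this
    refine h2'.congr fun n => ?_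
    rw [ENNReal.ofReal_div_of_pos (by positivity)]
  exact tendsto_of_tendsto_of_tendsto_of_le_of_le tendsto_const_nhds hupper
    (fun n => zero_le) key

/-- Weighted empirical CDF convergence: if the one- and two-dimensional distributions of
`s_T(j)` are uniformly asymptotically (independent) standard normal and the weights satisfy
`Σ w = 1`, `Σ w² → 0`, then `Σ_j w_j 𝟙{s_T(j) ≤ z} → Φ(z)` in probability for each `z`, and
uniformly in `z`. -/
theorem weighted_empirical_cdf_convergence {Ω ι : Type*} [MeasurableSpace Ω]
    (P : Measure Ω) [IsProbabilityMeasure P]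
    (N : ℕ → Finset ι) (s : ℕ → ι → Ω → ℝ) (w : ℕ → ι → ℝ)
    (hmeas : ∀ n j, Measurable (s n j))
    (hw0 : ∀ n j, 0 ≤ w n j)
    (hw1 : ∀ n, ∑ j ∈ N n, w n j = 1)
    (hw2 : Tendsto (fun n => ∑ j ∈ N n, (w n j) ^ 2) atTop (nhds 0))
    (h1 : ∀ z : ℝ, ∀ ε > (0 : ℝ), ∃ M : ℕ, ∀ n ≥ M, ∀ j ∈ N n,
      |(P {ω | s n j ω ≤ z}).toReal - stdNormalCDF z| ≤ ε)
    (h2 : ∀ z : ℝ, ∀ ε > (0 : ℝ), ∃ M : ℕ, ∀ n ≥ M, ∀ j₁ ∈ N n, ∀ j₂ ∈ N n, j₁ ≠ j₂ →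
      |(P {ω | s n j₁ ω ≤ z ∧ s n j₂ ω ≤ z}).toReal - (stdNormalCDF z) ^ 2| ≤ ε) :
    (∀ z : ℝ, ∀ ε > (0 : ℝ),
      Tendsto (fun n =>
          P {ω | ε ≤ |(∑ j ∈ N n, w n j * (if s n j ω ≤ z then 1 else 0)) -
            stdNormalCDF z|}) atTop (nhds 0)) ∧
    (∀ ε > (0 : ℝ),
      Tendsto (fun n =>
          P {ω | ε ≤ ⨆ z : ℝ, |(∑ j ∈ N n, w n j * (if s n j ω ≤ z then 1 else 0)) -
            stdNormalCDF z|}) atTop (nhds 0)) := by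
  constructor
  · intro z ε hε
    exact pointwise_conv P N s w hmeas hw0 hw1 hw2 h1 h2 z ε hε
  · intro ε hε
    set G : ℕ → Ω → ℝ → ℝ := fun n ω z =>
      ∑ j ∈ N n, w n j * (if s n j ω ≤ z then 1 else 0) with hGdef
    have hGmono : ∀ n ω, Monotone (G n ω) := by
      intro n ω z₁ z₂ hz
      refine Finset.sum_le_sum fun j _ => ?_
      refine mul_le_mul_of_nonneg_left ?_ (hw0 n j)
      by_cases h : s n j ω ≤ z₁
      · simp [h, le_trans h hz]
      · by_cases h' : s n j ω ≤ z₂ <;> simp [h, h']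
    have hG0 : ∀ n ω z, 0 ≤ G n ω z := by
      intro n ω z
      refine Finset.sum_nonneg fun j _ => mul_nonneg (hw0 n j) ?_
      by_cases h : s n j ω ≤ z <;> simp [h]
    have hG1 : ∀ n ω z, G n ω z ≤ 1 := by
      intro n ω z
      rw [← hw1 n]
      refine Finset.sum_le_sum fun j _ => ?_
      by_cases h : s n j ω ≤ z <;> simp [h, hw0 n j]
    set δ := ε/3 with hδdef
    have hδpos : 0 < δ := by positivity
    -- choose a with Φ a < δ and b with Φ b > 1 - δ, a < b
    obtain ⟨n₀, hn₀⟩ := (Metric.tendsto_atTop.mp stdNormalCDF_tendsto_atBot) δ hδpos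
    obtain ⟨n₁', hn₁⟩ := (Metric.tendsto_atTop.mp stdNormalCDF_tendsto_atTop) δ hδpos
    set a : ℝ := -(n₀ : ℝ) with hadef
    set n₁ : ℕ := max n₁' 1 with hn₁def
    set b : ℝ := (n₁ : ℝ) with hbdef
    have hΦa : stdNormalCDF a < δ := by
      have := hn₀ n₀ le_rfl
      rw [Real.dist_eq, sub_zero] at this
      calc stdNormalCDF a ≤ |stdNormalCDF a| := le_abs_self _
        _ < δ := this
    have hΦb : 1 - δ < stdNormalCDF b := by
      have := hn₁ n₁ (le_max_left _ _)
      rw [Real.dist_eq] at this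
      have := abs_lt.mp this
      linarith [this.1]
    have hab : a < b := by
      have h1' : a ≤ 0 := by simp [hadef]
      have h2' : (1:ℝ) ≤ b := by
        rw [hbdef]
        exact_mod_cast le_max_right n₁' 1
      linarith
    -- uniform continuity on [a, b]
    have huc := (isCompact_Icc (a := a) (b := b)).uniformContinuousOn_of_continuous
      stdNormalCDF_continuous.continuousOn
    rw [Metric.uniformContinuousOn_iff] at huc
    obtain ⟨η, hηpos, hucη⟩ := huc δ hδpos
    -- grid
    set K : ℕ := ⌈(b - a)/η⌉₊ + 1 with hKdef
    have hKpos : 0 < K := Nat.succ_pos _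
    set h : ℝ := (b - a)/K with hhdef
    have hhpos : 0 < h := by
      rw [hhdef]
      apply div_pos (by linarith)
      exact_mod_cast hKpos
    have hhη : h < η := by
      have hceil : (b - a)/η ≤ (⌈(b - a)/η⌉₊ : ℝ) := Nat.le_ceil _
      have hKgt : (b - a)/η < (K:ℝ) := by
        rw [hKdef]; push_cast; linarith
      rw [hhdef, div_lt_iff₀ (by exact_mod_cast hKpos : (0:ℝ) < (K:ℝ))]
      calc b - a = ((b - a)/η) * η := by field_simp
        _ < (K:ℝ) * η := by nlinarith
        _ = η * (K:ℝ) := mul_comm _ _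
    set x : ℕ → ℝ := fun i => a + i * h with hxdef
    have hx0 : x 0 = a := by simp [hxdef]
    have hxK : x K = b := by
      rw [hxdef, hhdef]
      field_simp
      ring
    have hxmono : ∀ i j : ℕ, i ≤ j → x i ≤ x j := by
      intro i j hij
      rw [hxdef]
      simp only
      have : (i:ℝ) ≤ (j:ℝ) := by exact_mod_cast hij
      nlinarith
    have hxmem : ∀ i, i ≤ K → x i ∈ Set.Icc a b := by
      intro i hi
      constructor
      · rw [← hx0]; exact hxmono 0 i (Nat.zero_le _)
      · rw [← hxK]; exact hxmono i K hi
    have hΦstep : ∀ i, i < K → stdNormalCDF (x (i+1)) - stdNormalCDF (x i) < δ := by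
      intro i hi
      have hd : dist (x (i+1)) (x i) < η := by
        rw [Real.dist_eq, hxdef]
        simp only
        have : (a + (↑(i+1):ℝ) * h) - (a + (i:ℝ) * h) = h := by push_cast; ring
        rw [this, abs_of_pos hhpos]
        exact hhη
      have := hucη (x (i+1)) (hxmem (i+1) hi) (x i) (hxmem i (le_of_lt hi)) hd
      rw [Real.dist_eq] at this
      have := abs_lt.mp this
      linarith [this.2]
    -- existence of bracketing grid point
    have hfind : ∀ z:ℝ, a ≤ z → z ≤ b → ∃ i, i < K ∧ x i ≤ z ∧ z ≤ x (i+1) := by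
      intro z hza hzb
      set m : ℕ := ⌊(z - a)/h⌋₊ with hmdef
      refine ⟨min m (K-1), ?_, ?_, ?_⟩
      · have : min m (K-1) ≤ K - 1 := min_le_right _ _
        omega
      · rw [hxdef]
        simp only
        have h1' : ((min m (K-1) : ℕ):ℝ) ≤ (m:ℝ) := by exact_mod_cast min_le_left _ _
        have h2' : (m:ℝ) ≤ (z - a)/h := Nat.floor_le (div_nonneg (by linarith) hhpos.le)
        have := (le_div_iff₀ hhpos).mp (le_trans h1' h2')
        linarith
      · by_cases hc : m ≤ K - 1
        · rw [min_eq_left hc, hxdef]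
          simp only
          have h2' : (z - a)/h < (m:ℝ) + 1 := Nat.lt_floor_add_one _
          have := (div_lt_iff₀ hhpos).mp h2'
          push_cast
          linarith
        · rw [min_eq_right (le_of_not_ge hc)]
          have : K - 1 + 1 = K := by omega
          rw [this, hxK]
          exact hzb
    -- the main inclusion
    have hincl : ∀ n, {ω | ε ≤ ⨆ z : ℝ, |G n ω z - stdNormalCDF z|}
        ⊆ ⋃ i ∈ Finset.range (K+1), {ω | δ ≤ |G n ω (x i) - stdNormalCDF (x i)|} := by
      intro n ω hω
      simp only [Set.mem_setOf_eq] at hω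
      by_contra hcon
      simp only [Set.mem_iUnion, Set.mem_setOf_eq, not_exists, not_le] at hcon
      have hgrid : ∀ i, i ≤ K → |G n ω (x i) - stdNormalCDF (x i)| < δ := by
        intro i hi
        exact hcon i (Finset.mem_range.mpr (by omega))
      -- bound everywhere
      have hbig : ∀ z : ℝ, |G n ω z - stdNormalCDF z| ≤ 2*δ := by
        intro z
        rcases le_or_gt z a with hza | hza
        · have hFz : G n ω z ≤ G n ω a := hGmono n ω hza
          have hΦz : stdNormalCDF z ≤ stdNormalCDF a := stdNormalCDF_mono hza
          have hga := hgrid 0 (Nat.zero_le _)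
          rw [hx0] at hga
          have := abs_lt.mp hga
          rw [abs_le]
          constructor
          · have := stdNormalCDF_nonneg z
            have := hG0 n ω z
            linarith
          · have := stdNormalCDF_nonneg z
            linarith
        · rcases le_or_gt b z with hzb | hzb
          · have hFz : G n ω b ≤ G n ω z := hGmono n ω hzb
            have hΦz : stdNormalCDF b ≤ stdNormalCDF z := stdNormalCDF_mono hzb
            have hgb := hgrid K le_rfl
            rw [hxK] at hgb
            have := abs_lt.mp hgb
            rw [abs_le]
            constructor
            · have := hG1 n ω z
              have := stdNormalCDF_le_one z
              linarith
            · have := hG1 n ω z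
              have := stdNormalCDF_le_one z
              linarith
          · obtain ⟨i, hiK, hxi, hxi1⟩ := hfind z (le_of_lt hza) (le_of_lt hzb)
            have hFlo : G n ω (x i) ≤ G n ω z := hGmono n ω hxi
            have hFhi : G n ω z ≤ G n ω (x (i+1)) := hGmono n ω hxi1
            have hΦlo : stdNormalCDF (x i) ≤ stdNormalCDF z := stdNormalCDF_mono hxi
            have hΦhi : stdNormalCDF z ≤ stdNormalCDF (x (i+1)) := stdNormalCDF_mono hxi1
            have hgi := abs_lt.mp (hgrid i (le_of_lt hiK))
            have hgi1 := abs_lt.mp (hgrid (i+1) hiK)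
            have hstep := hΦstep i hiK
            rw [abs_le]
            constructor <;> [skip; skip] <;>
              · obtain ⟨hgi1', hgi2'⟩ := hgi
                obtain ⟨hgi11', hgi12'⟩ := hgi1
                linarith
      have : (⨆ z : ℝ, |G n ω z - stdNormalCDF z|) ≤ 2*δ := ciSup_le hbig
      rw [hδdef] at this
      linarith
    -- conclude
    have hsum : Tendsto (fun n => ∑ i ∈ Finset.range (K+1),
        P {ω | δ ≤ |G n ω (x i) - stdNormalCDF (x i)|}) atTop (nhds 0) := by
      have h0 : (0:ENNReal) = ∑ i ∈ Finset.range (K+1), 0 := by simp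
      rw [h0]
      exact tendsto_finset_sum _ (fun i _ =>
        pointwise_conv P N s w hmeas hw0 hw1 hw2 h1 h2 (x i) δ hδpos)
    refine tendsto_of_tendsto_of_tendsto_of_le_of_le tendsto_const_nhds hsum
      (fun n => zero_le) (fun n => ?_)
    exact le_trans (measure_mono (hincl n)) (measure_biUnion_finset_le _ _)
end

section
/- Let γ : ℤ² → ℝ be absolutely summable, k : ℝ² → ℝ bounded, continuous at 0 with k(0) = 1, and h_T = (h_{T1}, h_{T2}) → 0 with h_{Tk}d_k → ∞. Then the bias of the lag-window estimator vanishes uniformly: sup_λ |(4π²)^{-1} Σ_{|j₁|<d₁,|j₂|<d₂} ((d₁−|j₁|)(d₂−|j₂|)/(d₁d₂)) γ(j) k(j₁h_{T1}, j₂h_{T2}) e^{-ij'λ} − (4π²)^{-1} Σ_{j∈ℤ²} γ(j) e^{-ij'λ}| → 0 as d₁, d₂ → ∞, provided additionally sup_x |k(x)| ≤ C*. -/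
open MeasureTheory Real Complex Filter Finset

/-- Uniform vanishing of the bias of the lag-window spectral estimator: for absolutely
summable `γ`, bounded `k` continuous at `0` with `k(0) = 1`, bandwidths `h → 0` with
`h·d → ∞`, one has
`sup_λ |(4π²)⁻¹ Σ_{|jᵢ|<dᵢ} ((d₁−|j₁|)(d₂−|j₂|)/(d₁d₂)) γ(j) k(j₁h₁,j₂h₂) e^{-ij'λ}
        − (4π²)⁻¹ Σ_{j∈ℤ²} γ(j) e^{-ij'λ}| → 0`. -/
theorem lag_window_bias_uniformly_vanishes
    (γ : ℤ × ℤ → ℝ) (hγ : Summable fun j : ℤ × ℤ => |γ j|)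
    (k : ℝ × ℝ → ℝ) (Cstar : ℝ) (hkb : ∀ x, |k x| ≤ Cstar)
    (hkc : ContinuousAt k 0) (hk0 : k 0 = 1)
    (d1 d2 : ℕ → ℕ) (hd1 : Tendsto (fun n => (d1 n : ℝ)) atTop atTop)
    (hd2 : Tendsto (fun n => (d2 n : ℝ)) atTop atTop)
    (h1 h2 : ℕ → ℝ) (hh1p : ∀ n, 0 < h1 n) (hh2p : ∀ n, 0 < h2 n)
    (hh10 : Tendsto h1 atTop (nhds 0)) (hh20 : Tendsto h2 atTop (nhds 0))
    (hh1d : Tendsto (fun n => h1 n * d1 n) atTop atTop)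
    (hh2d : Tendsto (fun n => h2 n * d2 n) atTop atTop) :
    Tendsto (fun n =>
        ⨆ l : ℝ × ℝ,
          ‖((4 * Real.pi ^ 2 : ℝ) : ℂ)⁻¹ *
              (∑ j ∈ (Finset.Icc (-(d1 n : ℤ) + 1) ((d1 n : ℤ) - 1)) ×ˢ
                  (Finset.Icc (-(d2 n : ℤ) + 1) ((d2 n : ℤ) - 1)),
                ((((d1 n : ℝ) - |(j.1 : ℝ)|) * ((d2 n : ℝ) - |(j.2 : ℝ)|) /
                      ((d1 n : ℝ) * (d2 n : ℝ)) * γ j *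
                    k ((j.1 : ℝ) * h1 n, (j.2 : ℝ) * h2 n) : ℝ) : ℂ) *
                  Complex.exp (-Complex.I * (((j.1 : ℝ) * l.1 + (j.2 : ℝ) * l.2) : ℝ))) -
            ((4 * Real.pi ^ 2 : ℝ) : ℂ)⁻¹ *
              ∑' j : ℤ × ℤ,
                ((γ j : ℝ) : ℂ) *
                  Complex.exp (-Complex.I * (((j.1 : ℝ) * l.1 + (j.2 : ℝ) * l.2) : ℝ))‖)
      atTop (nhds 0) := by
  classical
  -- the extended weighted coefficient
  set F : ℕ → ℤ × ℤ → ℝ := fun n j =>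
    if j ∈ (Finset.Icc (-(d1 n : ℤ) + 1) ((d1 n : ℤ) - 1)) ×ˢ
        (Finset.Icc (-(d2 n : ℤ) + 1) ((d2 n : ℤ) - 1)) then
      ((d1 n : ℝ) - |(j.1 : ℝ)|) * ((d2 n : ℝ) - |(j.2 : ℝ)|) /
          ((d1 n : ℝ) * (d2 n : ℝ)) * γ j * k ((j.1 : ℝ) * h1 n, (j.2 : ℝ) * h2 n)
    else 0 with hFdef
  have hCs1 : (1 : ℝ) ≤ Cstar := by
    have := hkb 0; rwa [hk0, abs_one] at this
  have hCs0 : (0 : ℝ) ≤ Cstar := le_trans zero_le_one hCs1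
  -- bound on F
  have hFbound : ∀ n j, |F n j| ≤ Cstar * |γ j| := by
    intro n j
    simp only [hFdef]
    split_ifs with hj
    · obtain ⟨hj1, hj2⟩ := Finset.mem_product.1 hj
      rw [Finset.mem_Icc] at hj1 hj2
      have hd1pos : (1 : ℤ) ≤ (d1 n : ℤ) := by omega
      have hd2pos : (1 : ℤ) ≤ (d2 n : ℤ) := by omega
      have habs1 : |j.1| ≤ (d1 n : ℤ) := abs_le.2 ⟨by omega, by omega⟩
      have habs2 : |j.2| ≤ (d2 n : ℤ) := abs_le.2 ⟨by omega, by omega⟩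
      have hj1' : |(j.1 : ℝ)| ≤ (d1 n : ℝ) := by
        rw [← Int.cast_abs]; exact_mod_cast habs1
      have hj2' : |(j.2 : ℝ)| ≤ (d2 n : ℝ) := by
        rw [← Int.cast_abs]; exact_mod_cast habs2
      have hd1r : (0 : ℝ) < (d1 n : ℝ) := by exact_mod_cast (by omega : (0:ℤ) < (d1 n : ℤ))
      have hd2r : (0 : ℝ) < (d2 n : ℝ) := by exact_mod_cast (by omega : (0:ℤ) < (d2 n : ℤ))
      have hw0 : 0 ≤ ((d1 n : ℝ) - |(j.1 : ℝ)|) * ((d2 n : ℝ) - |(j.2 : ℝ)|) /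
          ((d1 n : ℝ) * (d2 n : ℝ)) :=
        div_nonneg (mul_nonneg (by linarith) (by linarith)) (by positivity)
      have hw1 : ((d1 n : ℝ) - |(j.1 : ℝ)|) * ((d2 n : ℝ) - |(j.2 : ℝ)|) /
          ((d1 n : ℝ) * (d2 n : ℝ)) ≤ 1 := by
        rw [div_le_one (by positivity)]
        have h1' : (d1 n : ℝ) - |(j.1 : ℝ)| ≤ (d1 n : ℝ) := by
          have := abs_nonneg ((j.1 : ℝ)); linarith
        have h2' : (d2 n : ℝ) - |(j.2 : ℝ)| ≤ (d2 n : ℝ) := by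
          have := abs_nonneg ((j.2 : ℝ)); linarith
        exact mul_le_mul h1' h2' (by linarith) (le_of_lt hd1r)
      calc |((d1 n : ℝ) - |(j.1 : ℝ)|) * ((d2 n : ℝ) - |(j.2 : ℝ)|) /
              ((d1 n : ℝ) * (d2 n : ℝ)) * γ j * k ((j.1 : ℝ) * h1 n, (j.2 : ℝ) * h2 n)|
          = ((d1 n : ℝ) - |(j.1 : ℝ)|) * ((d2 n : ℝ) - |(j.2 : ℝ)|) /
              ((d1 n : ℝ) * (d2 n : ℝ)) * |γ j| * |k ((j.1 : ℝ) * h1 n, (j.2 : ℝ) * h2 n)| := by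
            rw [abs_mul, abs_mul, _root_.abs_of_nonneg hw0]
        _ ≤ 1 * |γ j| * Cstar := by
            apply mul_le_mul (mul_le_mul hw1 le_rfl (abs_nonneg _) zero_le_one)
              (hkb _) (abs_nonneg _) (by positivity)
        _ = Cstar * |γ j| := by ring
    · simpa using mul_nonneg hCs0 (abs_nonneg (γ j))
  -- pointwise convergence F n j → γ j
  have hFlim : ∀ j : ℤ × ℤ, Tendsto (fun n => F n j) atTop (nhds (γ j)) := by
    intro j
    have hev : ∀ᶠ n in atTop, F n j =
        ((d1 n : ℝ) - |(j.1 : ℝ)|) * ((d2 n : ℝ) - |(j.2 : ℝ)|) /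
          ((d1 n : ℝ) * (d2 n : ℝ)) * γ j * k ((j.1 : ℝ) * h1 n, (j.2 : ℝ) * h2 n) := by
      have e1 : ∀ᶠ n in atTop, ((|j.1| + 1 : ℤ) : ℝ) ≤ (d1 n : ℝ) :=
        hd1.eventually_ge_atTop _
      have e2 : ∀ᶠ n in atTop, ((|j.2| + 1 : ℤ) : ℝ) ≤ (d2 n : ℝ) :=
        hd2.eventually_ge_atTop _
      filter_upwards [e1, e2] with n hn1 hn2
      have hn1' : |j.1| + 1 ≤ (d1 n : ℤ) := by exact_mod_cast hn1
      have hn2' : |j.2| + 1 ≤ (d2 n : ℤ) := by exact_mod_cast hn2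
      have hmem : j ∈ (Finset.Icc (-(d1 n : ℤ) + 1) ((d1 n : ℤ) - 1)) ×ˢ
          (Finset.Icc (-(d2 n : ℤ) + 1) ((d2 n : ℤ) - 1)) := by
        rw [Finset.mem_product, Finset.mem_Icc, Finset.mem_Icc]
        have p1 := le_abs_self j.1
        have p2 := neg_abs_le j.1
        have p3 := le_abs_self j.2
        have p4 := neg_abs_le j.2
        omega
      simp only [hFdef, if_pos hmem]
    rw [tendsto_congr' hev]
    -- weight tends to 1
    have hw : Tendsto (fun n => ((d1 n : ℝ) - |(j.1 : ℝ)|) * ((d2 n : ℝ) - |(j.2 : ℝ)|) /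
        ((d1 n : ℝ) * (d2 n : ℝ))) atTop (nhds 1) := by
      have hev2 : ∀ᶠ n in atTop, ((d1 n : ℝ) - |(j.1 : ℝ)|) * ((d2 n : ℝ) - |(j.2 : ℝ)|) /
            ((d1 n : ℝ) * (d2 n : ℝ))
          = (1 - |(j.1 : ℝ)| / (d1 n : ℝ)) * (1 - |(j.2 : ℝ)| / (d2 n : ℝ)) := by
        filter_upwards [hd1.eventually_gt_atTop 0, hd2.eventually_gt_atTop 0] with n hn1 hn2
        field_simp
      rw [tendsto_congr' hev2]
      have t1 : Tendsto (fun n => 1 - |(j.1 : ℝ)| / (d1 n : ℝ)) atTop (nhds 1) := by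
        have := (tendsto_const_nhds (x := |(j.1 : ℝ)|) (f := atTop)).div_atTop hd1
        simpa using tendsto_const_nhds.sub this
      have t2 : Tendsto (fun n => 1 - |(j.2 : ℝ)| / (d2 n : ℝ)) atTop (nhds 1) := by
        have := (tendsto_const_nhds (x := |(j.2 : ℝ)|) (f := atTop)).div_atTop hd2
        simpa using tendsto_const_nhds.sub this
      simpa using t1.mul t2
    have hk : Tendsto (fun n => k ((j.1 : ℝ) * h1 n, (j.2 : ℝ) * h2 n)) atTop (nhds 1) := by
      have harg : Tendsto (fun n => (((j.1 : ℝ) * h1 n, (j.2 : ℝ) * h2 n) : ℝ × ℝ))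
          atTop (nhds (0 : ℝ × ℝ)) := by
        have a1 : Tendsto (fun n => (j.1 : ℝ) * h1 n) atTop (nhds 0) := by
          simpa using (tendsto_const_nhds (x := (j.1 : ℝ)) (f := atTop)).mul hh10
        have a2 : Tendsto (fun n => (j.2 : ℝ) * h2 n) atTop (nhds 0) := by
          simpa using (tendsto_const_nhds (x := (j.2 : ℝ)) (f := atTop)).mul hh20
        exact a1.prodMk_nhds a2
      have := hkc.tendsto.comp harg
      rwa [hk0] at this
    have := (hw.mul (tendsto_const_nhds (x := γ j))).mul hk
    simpa using this
  -- summability of the difference in absolute value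
  have hsumdiff : ∀ n, Summable (fun j => |F n j - γ j|) := by
    intro n
    apply Summable.of_norm_bounded (g := fun j => Cstar * |γ j| + |γ j|)
      ((hγ.mul_left Cstar).add hγ)
    intro j
    rw [Real.norm_eq_abs, _root_.abs_abs]
    exact le_trans (abs_sub _ _) (add_le_add (hFbound n j) le_rfl)
  -- the dominating bound sequence
  set B : ℕ → ℝ := fun n => (4 * Real.pi ^ 2 : ℝ)⁻¹ * ∑' j, |F n j - γ j| with hBdef
  have hpi : (0 : ℝ) < 4 * Real.pi ^ 2 := by positivity
  -- B → 0
  have hB0 : Tendsto B atTop (nhds 0) := by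
    have : Tendsto (fun n => ∑' j, |F n j - γ j|) atTop (nhds (∑' _ : ℤ × ℤ, (0 : ℝ))) := by
      apply tendsto_tsum_of_dominated_convergence
        (bound := fun j => Cstar * |γ j| + |γ j|) ((hγ.mul_left Cstar).add hγ)
      · intro j
        have : Tendsto (fun n => F n j - γ j) atTop (nhds 0) := by
          simpa using (hFlim j).sub (tendsto_const_nhds (x := γ j))
        simpa using this.abs
      · filter_upwards with n j
        rw [Real.norm_eq_abs, _root_.abs_abs]
        exact le_trans (abs_sub _ _) (add_le_add (hFbound n j) le_rfl)
    rw [tsum_zero] at this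
    simpa [hBdef] using this.const_mul _
  -- each sup is bounded by B n
  apply squeeze_zero (fun n => Real.iSup_nonneg (fun l => norm_nonneg _)) _ hB0
  intro n
  apply Real.iSup_le _ (mul_nonneg (by positivity) (tsum_nonneg (fun j => abs_nonneg _)))
  intro l
  set e : ℤ × ℤ → ℂ := fun j =>
    Complex.exp (-Complex.I * (((j.1 : ℝ) * l.1 + (j.2 : ℝ) * l.2) : ℝ)) with hedef
  have hnorme : ∀ j, ‖e j‖ = 1 := by
    intro j
    simp [hedef, Complex.norm_exp]
  -- summabilities
  have hsF : Summable (fun j => ((F n j : ℝ) : ℂ) * e j) := by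
    apply Summable.of_norm_bounded (g := fun j => Cstar * |γ j|) (hγ.mul_left Cstar)
    intro j
    rw [norm_mul, hnorme, mul_one, Complex.norm_real, Real.norm_eq_abs]
    exact hFbound n j
  have hsγ : Summable (fun j => ((γ j : ℝ) : ℂ) * e j) := by
    apply Summable.of_norm_bounded (g := fun j => |γ j|) hγ
    intro j
    rw [norm_mul, hnorme, mul_one, Complex.norm_real, Real.norm_eq_abs]
  -- rewrite finite sum as tsum
  have hfin : (∑ j ∈ (Finset.Icc (-(d1 n : ℤ) + 1) ((d1 n : ℤ) - 1)) ×ˢ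
        (Finset.Icc (-(d2 n : ℤ) + 1) ((d2 n : ℤ) - 1)),
        ((((d1 n : ℝ) - |(j.1 : ℝ)|) * ((d2 n : ℝ) - |(j.2 : ℝ)|) /
            ((d1 n : ℝ) * (d2 n : ℝ)) * γ j *
          k ((j.1 : ℝ) * h1 n, (j.2 : ℝ) * h2 n) : ℝ) : ℂ) * e j)
      = ∑' j : ℤ × ℤ, ((F n j : ℝ) : ℂ) * e j := by
    rw [tsum_eq_sum (s := (Finset.Icc (-(d1 n : ℤ) + 1) ((d1 n : ℤ) - 1)) ×ˢ
        (Finset.Icc (-(d2 n : ℤ) + 1) ((d2 n : ℤ) - 1)))]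
    · apply Finset.sum_congr rfl
      intro j hj
      simp only [hFdef, if_pos hj]
    · intro j hj
      simp only [hFdef, if_neg hj]
      simp
  calc ‖((4 * Real.pi ^ 2 : ℝ) : ℂ)⁻¹ *
          (∑ j ∈ (Finset.Icc (-(d1 n : ℤ) + 1) ((d1 n : ℤ) - 1)) ×ˢ
              (Finset.Icc (-(d2 n : ℤ) + 1) ((d2 n : ℤ) - 1)),
            ((((d1 n : ℝ) - |(j.1 : ℝ)|) * ((d2 n : ℝ) - |(j.2 : ℝ)|) /
                ((d1 n : ℝ) * (d2 n : ℝ)) * γ j *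
              k ((j.1 : ℝ) * h1 n, (j.2 : ℝ) * h2 n) : ℝ) : ℂ) * e j) -
        ((4 * Real.pi ^ 2 : ℝ) : ℂ)⁻¹ * ∑' j : ℤ × ℤ, ((γ j : ℝ) : ℂ) * e j‖
      = ‖((4 * Real.pi ^ 2 : ℝ) : ℂ)⁻¹‖ *
          ‖∑' j : ℤ × ℤ, (((F n j : ℝ) : ℂ) * e j - ((γ j : ℝ) : ℂ) * e j)‖ := by
        rw [hfin, ← mul_sub, norm_mul, hsF.tsum_sub hsγ]
    _ ≤ (4 * Real.pi ^ 2 : ℝ)⁻¹ * ∑' j, ‖((F n j : ℝ) : ℂ) * e j - ((γ j : ℝ) : ℂ) * e j‖ := by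
        have hnormc : ‖((4 * Real.pi ^ 2 : ℝ) : ℂ)⁻¹‖ = (4 * Real.pi ^ 2 : ℝ)⁻¹ := by
          rw [norm_inv, Complex.norm_real, Real.norm_eq_abs, _root_.abs_of_pos hpi]
        rw [hnormc]
        refine mul_le_mul_of_nonneg_left (norm_tsum_le_tsum_norm ?_) (by positivity)
        apply Summable.of_norm_bounded (g := fun j => Cstar * |γ j| + |γ j|)
          ((hγ.mul_left Cstar).add hγ)
        intro j
        rw [norm_norm]
        refine le_trans (norm_sub_le _ _) (add_le_add ?_ ?_)
        · rw [norm_mul, hnorme, mul_one, Complex.norm_real, Real.norm_eq_abs]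
          exact hFbound n j
        · rw [norm_mul, hnorme, mul_one, Complex.norm_real, Real.norm_eq_abs]
    _ = B n := by
        rw [hBdef]
        congr 1
        apply tsum_congr
        intro j
        rw [← sub_mul, norm_mul, hnorme, mul_one, ← Complex.ofReal_sub,
          Complex.norm_real, Real.norm_eq_abs]
end
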